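/- Let φ:(0,∞)→(0,∞) satisfy lim_{T→∞} φ(T) = ∞ and liminf_{T→∞} (ln φ(T))/T > 0 (this covers both the case lim_{T→∞}(ln φ(T))/T = k for a constant k ∈ (0,∞) and the case lim_{T→∞}(ln φ(T))/T = ∞). Then for all constants M > 0, a > 0 and l ∈ [0,1), limsup_{T→∞} (1/(φ(T)·ln φ(T))) · ln( Σ_{r=⌊aφ(T)⌋}^{∞} exp{ (r/2)(1+l)·ln r + r·ln(2M) } · e^{−T} T^r / r! ) ≤ −(1−l)·a/3, where the infinite series converges for every T with ⌊aφ(T)⌋ ≥ 1. -/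

import Mathlib

open Filter Real

private lemma factorial_lb (r : ℕ) :
    Real.exp ((r : ℝ) * Real.log r - r) ≤ (Nat.factorial r : ℝ) := by
  rcases Nat.eq_zero_or_pos r with h | h
  · subst h; simp
  · have hr0 : (0 : ℝ) < r := by exact_mod_cast h
    have h1 : (r : ℝ) ^ r / (Nat.factorial r : ℝ) ≤ Real.exp r :=
      Real.pow_div_factorial_le_exp (x := (r:ℝ)) hr0.le r
    have h2 : (r : ℝ) ^ r = Real.exp ((r : ℝ) * Real.log r) := by
      rw [Real.exp_nat_mul, Real.exp_log hr0]
    have hf : (0 : ℝ) < (Nat.factorial r : ℝ) := by exact_mod_cast r.factorial_pos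
    rw [h2, div_le_iff₀ hf] at h1
    rw [Real.exp_sub, div_le_iff₀ (Real.exp_pos _)]
    linarith [h1]

private lemma aux_term (M l T : ℝ) (hM : 0 < M) (hT : 0 < T) (r : ℕ) (hr : 1 ≤ r) :
    Real.exp (((r : ℝ) / 2) * (1 + l) * Real.log r + (r : ℝ) * Real.log (2 * M))
      * Real.exp (-T) * T ^ r / (Nat.factorial r : ℝ)
    ≤ Real.exp ((r : ℝ) * (Real.log (2 * M * T) + 1)
        - ((1 - l) / 2) * ((r : ℝ) * Real.log r)) := by
  have hr0 : (0 : ℝ) < r := by exact_mod_cast hr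
  have hTpow : T ^ r = Real.exp ((r : ℝ) * Real.log T) := by
    rw [Real.exp_nat_mul, Real.exp_log hT]
  have hnum : Real.exp (((r : ℝ) / 2) * (1 + l) * Real.log r + (r : ℝ) * Real.log (2 * M))
      * Real.exp (-T) * T ^ r
      = Real.exp (((r : ℝ) / 2) * (1 + l) * Real.log r + (r : ℝ) * Real.log (2 * M)
          + (-T) + (r : ℝ) * Real.log T) := by
    rw [hTpow, ← Real.exp_add, ← Real.exp_add]
  rw [hnum]
  have hfac := factorial_lb r
  calc Real.exp (((r : ℝ) / 2) * (1 + l) * Real.log r + (r : ℝ) * Real.log (2 * M)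
          + (-T) + (r : ℝ) * Real.log T) / (Nat.factorial r : ℝ)
      ≤ Real.exp (((r : ℝ) / 2) * (1 + l) * Real.log r + (r : ℝ) * Real.log (2 * M)
          + (-T) + (r : ℝ) * Real.log T) / Real.exp ((r : ℝ) * Real.log r - r) := by
        gcongr
    _ = Real.exp ((((r : ℝ) / 2) * (1 + l) * Real.log r + (r : ℝ) * Real.log (2 * M)
          + (-T) + (r : ℝ) * Real.log T) - ((r : ℝ) * Real.log r - r)) :=
        (Real.exp_sub _ _).symm
    _ ≤ Real.exp ((r : ℝ) * (Real.log (2 * M * T) + 1)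
        - ((1 - l) / 2) * ((r : ℝ) * Real.log r)) := by
        rw [Real.exp_le_exp, Real.log_mul (by positivity) (ne_of_gt hT)]
        have key : (((r : ℝ) / 2) * (1 + l) * Real.log r + (r : ℝ) * Real.log (2 * M)
          + (-T) + (r : ℝ) * Real.log T) - ((r : ℝ) * Real.log r - r)
          = ((r : ℝ) * ((Real.log (2 * M) + Real.log T) + 1)
            - ((1 - l) / 2) * ((r : ℝ) * Real.log r)) - T := by ring
        rw [key]; linarith

private lemma sumbound (δ K : ℝ) (hδ : 0 < δ) (N : ℕ) :
    Summable (fun j : ℕ => Real.exp (((N + j : ℕ) : ℝ) * K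
      - δ * (((N + j : ℕ) : ℝ) * Real.log ((N + j : ℕ) : ℝ)))) := by
  set m := ⌈Real.exp ((K + 1) / δ)⌉₊ with hm
  rw [← summable_nat_add_iff m]
  apply Summable.of_nonneg_of_le (fun j => (Real.exp_pos _).le)
    (fun j => ?_) Real.summable_exp_neg_nat
  rw [Real.exp_le_exp]
  have hcast : ((N + (j + m) : ℕ) : ℝ) = (N : ℝ) + (j : ℝ) + (m : ℝ) := by push_cast; ring
  have h1 : Real.exp ((K + 1) / δ) ≤ ((N + (j + m) : ℕ) : ℝ) := by
    have h := Nat.le_ceil (Real.exp ((K + 1) / δ))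
    rw [hcast]
    have hN0 : (0 : ℝ) ≤ (N : ℝ) := Nat.cast_nonneg _
    have hj0 : (0 : ℝ) ≤ (j : ℝ) := Nat.cast_nonneg _
    rw [← hm] at h
    linarith
  have h2 : (K + 1) / δ ≤ Real.log ((N + (j + m) : ℕ) : ℝ) := by
    rw [← Real.log_exp ((K + 1) / δ)]
    exact Real.log_le_log (Real.exp_pos _) h1
  have h3 : K - δ * Real.log ((N + (j + m) : ℕ) : ℝ) ≤ -1 := by
    rw [div_le_iff₀ hδ] at h2; nlinarith
  have h4 : (0 : ℝ) ≤ ((N + (j + m) : ℕ) : ℝ) := Nat.cast_nonneg _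
  have h5 : (j : ℝ) ≤ ((N + (j + m) : ℕ) : ℝ) := by
    rw [hcast]
    have hN0 : (0 : ℝ) ≤ (N : ℝ) := Nat.cast_nonneg _
    have hm0 : (0 : ℝ) ≤ (m : ℝ) := Nat.cast_nonneg _
    linarith
  have h6 := mul_le_mul_of_nonneg_left h3 h4
  nlinarith [h6, h5]

private lemma term_summable (M l T : ℝ) (hM : 0 < M) (hl1 : l < 1) (hT : 0 < T)
    (N : ℕ) (hN : 1 ≤ N) :
    Summable (fun j : ℕ =>
      Real.exp ((((N + j : ℕ) : ℝ) / 2) * (1 + l) * Real.log ((N + j : ℕ) : ℝ)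
          + ((N + j : ℕ) : ℝ) * Real.log (2 * M))
        * Real.exp (-T) * T ^ (N + j) / (Nat.factorial (N + j))) := by
  apply Summable.of_nonneg_of_le (fun j => by positivity) (fun j => ?_)
    (sumbound ((1 - l) / 2) (Real.log (2 * M * T) + 1) (by linarith) N)
  exact aux_term M l T hM hT (N + j) (le_trans hN (Nat.le_add_right _ _))
set_option maxHeartbeats 1000000 in
theorem stmt_9 (φ : ℝ → ℝ) (hφpos : ∀ T > (0:ℝ), 0 < φ T)
    (hφ : Filter.Tendsto φ Filter.atTop Filter.atTop)
    (hgrow : ∃ c > (0:ℝ), ∀ᶠ T in Filter.atTop, c ≤ Real.log (φ T) / T)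
    (M a l : ℝ) (hM : 0 < M) (ha : 0 < a) (hl : l ∈ Set.Ico (0:ℝ) 1) :
    (∀ T : ℝ, 0 < T → 1 ≤ ⌊a * φ T⌋₊ → Summable (fun j : ℕ =>
      Real.exp ((((⌊a * φ T⌋₊ + j : ℕ) : ℝ) / 2) * (1 + l)
            * Real.log ((⌊a * φ T⌋₊ + j : ℕ) : ℝ)
          + ((⌊a * φ T⌋₊ + j : ℕ) : ℝ) * Real.log (2 * M))
        * Real.exp (-T) * T ^ (⌊a * φ T⌋₊ + j) / (Nat.factorial (⌊a * φ T⌋₊ + j)))) ∧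
    Filter.limsup (fun T : ℝ =>
      (1 / (φ T * Real.log (φ T))) *
        Real.log (∑' j : ℕ,
          Real.exp ((((⌊a * φ T⌋₊ + j : ℕ) : ℝ) / 2) * (1 + l)
                * Real.log ((⌊a * φ T⌋₊ + j : ℕ) : ℝ)
              + ((⌊a * φ T⌋₊ + j : ℕ) : ℝ) * Real.log (2 * M))
            * Real.exp (-T) * T ^ (⌊a * φ T⌋₊ + j) / (Nat.factorial (⌊a * φ T⌋₊ + j))))
      Filter.atTop ≤ -(1 - l) * a / 3 := by
  obtain ⟨hl0, hl1⟩ := hl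
  obtain ⟨c, hc, hcev⟩ := hgrow
  have h1l : (0:ℝ) < 1 - l := by linarith
  refine ⟨fun T hT hN1 => term_summable M l T hM hl1 hT _ hN1, ?_⟩
  have hγ : (0:ℝ) < (3249/8000 - 1/3) * ((1 - l) * a) := by positivity
  set γ : ℝ := (3249/8000 - 1/3) * ((1 - l) * a) with hγdef
  have hlogφ : Tendsto (fun T => Real.log (φ T)) atTop atTop :=
    Real.tendsto_log_atTop.comp hφ
  -- eventual facts
  have e1 : ∀ᶠ T : ℝ in atTop, (1:ℝ) < T := eventually_gt_atTop 1
  have e3 : ∀ᶠ T in atTop, 20 / a ≤ φ T := hφ.eventually (eventually_ge_atTop _)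
  have e4 : ∀ᶠ T in atTop, (1:ℝ) ≤ Real.log (φ T) := hlogφ.eventually (eventually_ge_atTop _)
  have e4a : ∀ᶠ T in atTop, -20 * Real.log (19/20 * a) ≤ Real.log (φ T) :=
    hlogφ.eventually (eventually_ge_atTop _)
  have e4b : ∀ᶠ T in atTop, 20 / ((1-l)/2) ≤ Real.log (φ T) :=
    hlogφ.eventually (eventually_ge_atTop _)
  have e4c : ∀ᶠ T in atTop, Real.log 2 / γ ≤ Real.log (φ T) :=
    hlogφ.eventually (eventually_ge_atTop _)
  have e4d : ∀ᶠ T in atTop, |Real.log a| + 1 ≤ Real.log (φ T) :=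
    hlogφ.eventually (eventually_ge_atTop _)
  have e5 : ∀ᶠ T in atTop, (1:ℝ) ≤ φ T := hφ.eventually (eventually_ge_atTop 1)
  have hη : (0:ℝ) < c * ((1-l)/2) * 19 / 400 := by positivity
  have e6 : ∀ᶠ T : ℝ in atTop, Real.log T ≤ (c * ((1-l)/2) * 19 / 400) * T := by
    have h := Real.isLittleO_log_id_atTop.def hη
    filter_upwards [h, eventually_gt_atTop 1] with T hT hT1
    have h2 : |Real.log T| ≤ c * ((1-l)/2) * 19 / 400 * |T| := by
      simpa [Real.norm_eq_abs] using hT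
    rwa [abs_of_nonneg (Real.log_nonneg hT1.le), abs_of_pos (by linarith)] at h2
  have e7 : ∀ᶠ T : ℝ in atTop, Real.log (2*M) + 1 ≤ (c * ((1-l)/2) * 19 / 400) * T := by
    filter_upwards [eventually_ge_atTop ((Real.log (2*M) + 1) / (c * ((1-l)/2) * 19 / 400))]
      with T h
    rw [div_le_iff₀ hη] at h
    linarith
  -- the pointwise bound
  have hev : ∀ᶠ T in atTop,
      (1 / (φ T * Real.log (φ T))) *
        Real.log (∑' j : ℕ,
          Real.exp ((((⌊a * φ T⌋₊ + j : ℕ) : ℝ) / 2) * (1 + l)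
                * Real.log ((⌊a * φ T⌋₊ + j : ℕ) : ℝ)
              + ((⌊a * φ T⌋₊ + j : ℕ) : ℝ) * Real.log (2 * M))
            * Real.exp (-T) * T ^ (⌊a * φ T⌋₊ + j) / (Nat.factorial (⌊a * φ T⌋₊ + j)))
      ≤ -(1 - l) * a / 3 := by
    filter_upwards [e1, hcev, e3, e4, e4a, e4b, e4c, e5, e6, e7] with T hT1 hcT h3 h4 h4a h4b
      h4c h5 h6 h7
    have hT0 : (0:ℝ) < T := lt_trans one_pos hT1
    have hP : 0 < φ T := hφpos T hT0
    set N := ⌊a * φ T⌋₊ with hNdef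
    set L := Real.log (φ T) with hLdef
    have hcTL : c * T ≤ L := by
      rw [le_div_iff₀ hT0] at hcT; linarith [hcT]
    have haφ : 20 ≤ a * φ T := by
      rw [div_le_iff₀ ha] at h3; linarith [h3]
    have hN1 : 1 ≤ N := Nat.le_floor (by push_cast; linarith)
    have hNlow : 19/20 * (a * φ T) ≤ (N:ℝ) := by
      have := Nat.sub_one_lt_floor (a * φ T)
      rw [← hNdef] at this
      linarith
    have hNup : (N:ℝ) ≤ a * φ T := Nat.floor_le (by positivity)
    have hNpos : (0:ℝ) < N := by
      have : (0:ℝ) < 19/20 * (a * φ T) := by linarith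
      linarith
    have hlogN_low : 19/20 * L ≤ Real.log N := by
      have hpos : (0:ℝ) < 19/20 * a * φ T := by positivity
      have h' : Real.log (19/20 * a * φ T) ≤ Real.log N :=
        Real.log_le_log hpos (by linarith [hNlow])
      rw [Real.log_mul (by positivity) (ne_of_gt hP)] at h'
      linarith [h4a, h']
    have hlogN_nonneg : 0 ≤ Real.log N := le_trans (by linarith [h4]) hlogN_low
    have hK : Real.log (2*M*T) + 1 ≤ (1-l)/20 * Real.log N := by
      rw [Real.log_mul (by positivity) (ne_of_gt hT0)]
      have step1 : Real.log (2*M) + Real.log T + 1 ≤ c * ((1-l)/2) * 19 / 200 * T := by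
        linarith [h6, h7]
      have step2 : c * ((1-l)/2) * 19 / 200 * T ≤ ((1-l)/2) * 19 / 200 * L := by
        have := mul_le_mul_of_nonneg_left hcTL
          (show (0:ℝ) ≤ (1-l)/2 * 19 / 200 by positivity)
        linarith [this]
      have step3 : ((1-l)/2) * 19 / 200 * L ≤ (1-l)/20 * Real.log N := by
        have := mul_le_mul_of_nonneg_left hlogN_low
          (show (0:ℝ) ≤ (1-l)/20 by positivity)
        linarith [this]
      linarith
    have hβ1 : (1:ℝ) ≤ 9*(1-l)/20 * Real.log N := by
      have hL20 : 20 / ((1-l)/2) ≤ L := h4b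
      rw [div_le_iff₀ (by positivity : (0:ℝ) < (1-l)/2)] at hL20
      have h40 : 40 ≤ (1-l) * L := by linarith
      have := mul_le_mul_of_nonneg_left hlogN_low
        (show (0:ℝ) ≤ 9*(1-l)/20 by positivity)
      linarith [this, h40]
    have hsum := term_summable M l T hM hl1 hT0 N hN1
    -- termwise bound
    have hterm : ∀ j : ℕ,
        Real.exp ((((N + j : ℕ) : ℝ) / 2) * (1 + l) * Real.log ((N + j : ℕ) : ℝ)
            + ((N + j : ℕ) : ℝ) * Real.log (2 * M))
          * Real.exp (-T) * T ^ (N + j) / (Nat.factorial (N + j))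
        ≤ Real.exp (-(9*(1-l)/20) * ((N:ℝ) * Real.log N)) * Real.exp (-1) ^ j := by
      intro j
      refine (aux_term M l T hM hT0 (N + j) (le_trans hN1 (Nat.le_add_right _ _))).trans ?_
      rw [← Real.exp_nat_mul, ← Real.exp_add, Real.exp_le_exp]
      have hx : ((N + j : ℕ) : ℝ) = (N : ℝ) + (j : ℝ) := by push_cast; ring
      have hx0 : (0:ℝ) ≤ ((N + j : ℕ) : ℝ) := Nat.cast_nonneg _
      have hj0 : (0:ℝ) ≤ (j : ℝ) := Nat.cast_nonneg _
      have hlogmono : Real.log N ≤ Real.log ((N + j : ℕ) : ℝ) :=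
        Real.log_le_log hNpos (by rw [hx]; linarith)
      have s1 : ((N + j : ℕ) : ℝ) * (Real.log (2*M*T) + 1)
          ≤ ((N + j : ℕ) : ℝ) * ((1-l)/20 * Real.log N) :=
        mul_le_mul_of_nonneg_left hK hx0
      have s2 : ((1-l)/2) * (((N + j : ℕ) : ℝ) * Real.log N)
          ≤ ((1-l)/2) * (((N + j : ℕ) : ℝ) * Real.log ((N + j : ℕ) : ℝ)) := by
        apply mul_le_mul_of_nonneg_left (mul_le_mul_of_nonneg_left hlogmono hx0) (by linarith)
      have s3 : (j:ℝ) * 1 ≤ (j:ℝ) * (9*(1-l)/20 * Real.log N) :=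
        mul_le_mul_of_nonneg_left hβ1 hj0
      have s4 : ((1-l)) * (((N + j : ℕ) : ℝ) * Real.log N)
          = (1-l) * ((N:ℝ) * Real.log N) + (1-l) * ((j:ℝ) * Real.log N) := by
        rw [hx]; ring
      linarith [s1, s2, s3, s4]
    -- sum bound
    have hgeo : Summable (fun j : ℕ =>
        Real.exp (-(9*(1-l)/20) * ((N:ℝ) * Real.log N)) * Real.exp (-1) ^ j) :=
      (summable_geometric_of_lt_one (Real.exp_pos _).le
        (Real.exp_lt_one_iff.mpr (by norm_num))).mul_left _
    set S := ∑' j : ℕ,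
        Real.exp ((((N + j : ℕ) : ℝ) / 2) * (1 + l) * Real.log ((N + j : ℕ) : ℝ)
            + ((N + j : ℕ) : ℝ) * Real.log (2 * M))
          * Real.exp (-T) * T ^ (N + j) / (Nat.factorial (N + j)) with hSdef
    have hSle : S ≤ Real.exp (-(9*(1-l)/20) * ((N:ℝ) * Real.log N)) * (1 - Real.exp (-1))⁻¹ := by
      calc S ≤ ∑' j : ℕ, Real.exp (-(9*(1-l)/20) * ((N:ℝ) * Real.log N)) * Real.exp (-1) ^ j :=
            Summable.tsum_le_tsum hterm hsum hgeo
        _ = Real.exp (-(9*(1-l)/20) * ((N:ℝ) * Real.log N)) * ∑' j : ℕ, Real.exp (-1) ^ j :=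
            tsum_mul_left
        _ = _ := by
            rw [tsum_geometric_of_lt_one (Real.exp_pos _).le
              (Real.exp_lt_one_iff.mpr (by norm_num))]
    have h2e : (1 - Real.exp (-1))⁻¹ ≤ 2 := by
      have h2exp : (2:ℝ) ≤ Real.exp 1 := by linarith [Real.add_one_le_exp 1]
      have he : Real.exp (-1) ≤ 1/2 := by
        rw [Real.exp_neg]
        calc (Real.exp 1)⁻¹ ≤ (2:ℝ)⁻¹ := by
              apply inv_anti₀ (by norm_num) h2exp
          _ = 1/2 := by norm_num
      calc (1 - Real.exp (-1))⁻¹ ≤ ((1:ℝ)/2)⁻¹ := by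
            apply inv_anti₀ (by norm_num) (by linarith)
        _ = 2 := by norm_num
    have hS2 : S ≤ 2 * Real.exp (-(9*(1-l)/20) * ((N:ℝ) * Real.log N)) := by
      calc S ≤ Real.exp (-(9*(1-l)/20) * ((N:ℝ) * Real.log N)) * (1 - Real.exp (-1))⁻¹ := hSle
        _ ≤ Real.exp (-(9*(1-l)/20) * ((N:ℝ) * Real.log N)) * 2 :=
            mul_le_mul_of_nonneg_left h2e (Real.exp_pos _).le
        _ = _ := mul_comm _ _
    have hS0 : 0 < S := by
      have ht0 : (0:ℝ) < Real.exp ((((N + 0 : ℕ) : ℝ) / 2) * (1 + l) * Real.log ((N + 0 : ℕ) : ℝ)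
            + ((N + 0 : ℕ) : ℝ) * Real.log (2 * M))
          * Real.exp (-T) * T ^ (N + 0) / (Nat.factorial (N + 0)) := by positivity
      exact lt_of_lt_of_le ht0 (Summable.le_tsum hsum 0 (fun j _ => by positivity))
    have hlogS : Real.log S ≤ Real.log 2 - 9*(1-l)/20 * ((N:ℝ) * Real.log N) := by
      have h := Real.log_le_log hS0 hS2
      rw [Real.log_mul two_ne_zero (Real.exp_ne_zero _), Real.log_exp] at h
      linarith
    have hPL : (0:ℝ) < φ T * L := mul_pos hP (lt_of_lt_of_le one_pos h4)
    have hmono : (1 / (φ T * L)) * Real.log S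
        ≤ (1 / (φ T * L)) * (Real.log 2 - 9*(1-l)/20 * ((N:ℝ) * Real.log N)) :=
      mul_le_mul_of_nonneg_left hlogS (by positivity)
    refine le_trans hmono ?_
    rw [one_div, inv_mul_le_iff₀ hPL]
    -- key numeric bounds
    have hNlogN : (19/20 * (a * φ T)) * (19/20 * L) ≤ (N:ℝ) * Real.log N := by
      apply mul_le_mul hNlow hlogN_low (by linarith) (le_of_lt hNpos)
    have hlog2 : Real.log 2 ≤ γ * (φ T * L) := by
      have hLγ : Real.log 2 / γ ≤ L := h4c
      rw [div_le_iff₀ hγ] at hLγ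
      have hLle : L ≤ φ T * L :=
        le_mul_of_one_le_left (by linarith) h5
      have := mul_le_mul_of_nonneg_left hLle hγ.le
      linarith [this, hLγ]
    have hBB : (3249/8000) * ((1-l) * a) * (φ T * L) ≤ 9*(1-l)/20 * ((N:ℝ) * Real.log N) := by
      have := mul_le_mul_of_nonneg_left hNlogN (by positivity : (0:ℝ) ≤ 9*(1-l)/20)
      linarith [this]
    rw [hγdef] at hlog2
    linarith [hlog2, hBB]
  -- lower bound for coboundedness
  have hlow : ∀ᶠ T in atTop,
      -(2 * a + a * |Real.log (2*M)| + 1 / c) ≤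
      (1 / (φ T * Real.log (φ T))) *
        Real.log (∑' j : ℕ,
          Real.exp ((((⌊a * φ T⌋₊ + j : ℕ) : ℝ) / 2) * (1 + l)
                * Real.log ((⌊a * φ T⌋₊ + j : ℕ) : ℝ)
              + ((⌊a * φ T⌋₊ + j : ℕ) : ℝ) * Real.log (2 * M))
            * Real.exp (-T) * T ^ (⌊a * φ T⌋₊ + j) / (Nat.factorial (⌊a * φ T⌋₊ + j))) := by
    filter_upwards [e1, hcev, e3, e4, e4d, e5] with T hT1 hcT h3 h4 h4d h5
    have hT0 : (0:ℝ) < T := lt_trans one_pos hT1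
    have hP : 0 < φ T := hφpos T hT0
    set N := ⌊a * φ T⌋₊ with hNdef
    set L := Real.log (φ T) with hLdef
    have hcTL : c * T ≤ L := by
      rw [le_div_iff₀ hT0] at hcT; linarith [hcT]
    have haφ : 20 ≤ a * φ T := by
      rw [div_le_iff₀ ha] at h3; linarith [h3]
    have hN1 : 1 ≤ N := Nat.le_floor (by push_cast; linarith)
    have hNpos : (0:ℝ) < N := by exact_mod_cast hN1
    have hNup : (N:ℝ) ≤ a * φ T := Nat.floor_le (by positivity)
    have hlogN_nonneg : 0 ≤ Real.log N := Real.log_nonneg (by exact_mod_cast hN1)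
    have hlogN_up : Real.log N ≤ 2 * L := by
      have h' : Real.log N ≤ Real.log (a * φ T) := Real.log_le_log hNpos hNup
      rw [Real.log_mul (ne_of_gt ha) (ne_of_gt hP)] at h'
      have : Real.log a ≤ |Real.log a| := le_abs_self _
      linarith
    have hsum := term_summable M l T hM hl1 hT0 N hN1
    set t0 := Real.exp ((((N + 0 : ℕ) : ℝ) / 2) * (1 + l) * Real.log ((N + 0 : ℕ) : ℝ)
          + ((N + 0 : ℕ) : ℝ) * Real.log (2 * M))
        * Real.exp (-T) * T ^ (N + 0) / (Nat.factorial (N + 0)) with ht0def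
    have ht0pos : 0 < t0 := by rw [ht0def]; positivity
    set S := ∑' j : ℕ,
        Real.exp ((((N + j : ℕ) : ℝ) / 2) * (1 + l) * Real.log ((N + j : ℕ) : ℝ)
            + ((N + j : ℕ) : ℝ) * Real.log (2 * M))
          * Real.exp (-T) * T ^ (N + j) / (Nat.factorial (N + j)) with hSdef
    have hS0 : 0 < S := lt_of_lt_of_le ht0pos (Summable.le_tsum hsum 0 (fun j _ => by positivity))
    have hlogt0 : Real.log t0 ≤ Real.log S :=
      Real.log_le_log ht0pos (Summable.le_tsum hsum 0 (fun j _ => by positivity))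
    -- compute log t0
    have hfactle : Real.log (Nat.factorial (N + 0) : ℝ) ≤ (N:ℝ) * Real.log N := by
      have h1 : ((Nat.factorial (N + 0) : ℕ) : ℝ) ≤ ((N:ℝ)) ^ N := by
        rw [Nat.add_zero]
        exact_mod_cast Nat.factorial_le_pow N
      have h2 : Real.log ((Nat.factorial (N + 0) : ℕ) : ℝ) ≤ Real.log ((N:ℝ) ^ N) :=
        Real.log_le_log (by exact_mod_cast (Nat.factorial_pos _)) h1
      rwa [Real.log_pow] at h2
    have hlogt0eq : Real.log t0 = ((((N + 0 : ℕ) : ℝ) / 2) * (1 + l) * Real.log ((N + 0 : ℕ) : ℝ)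
          + ((N + 0 : ℕ) : ℝ) * Real.log (2 * M)) + (-T) + (N + 0 : ℕ) * Real.log T
          - Real.log (Nat.factorial (N + 0) : ℝ) := by
      rw [ht0def, Real.log_div (by positivity) (by positivity),
        Real.log_mul (by positivity) (by positivity),
        Real.log_mul (Real.exp_ne_zero _) (Real.exp_ne_zero _),
        Real.log_exp, Real.log_exp, Real.log_pow]
      all_goals (push_cast; ring)
    have hlb : -(2 * a + a * |Real.log (2*M)| + 1 / c) * (φ T * L) ≤ Real.log t0 := by
      rw [hlogt0eq]
      have c1 : (0:ℝ) ≤ (((N + 0 : ℕ) : ℝ) / 2) * (1 + l) * Real.log ((N + 0 : ℕ) : ℝ) := by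
        have : ((N + 0 : ℕ) : ℝ) = (N:ℝ) := by push_cast; ring
        rw [this]
        have : (0:ℝ) ≤ 1 + l := by linarith
        positivity
      have c2 : -(a * |Real.log (2*M)|) * (φ T * L) ≤ ((N + 0 : ℕ) : ℝ) * Real.log (2 * M) := by
        have hcast : ((N + 0 : ℕ) : ℝ) = (N:ℝ) := by push_cast; ring
        rw [hcast]
        have habs : -(|Real.log (2*M)|) ≤ Real.log (2*M) := neg_abs_le _
        have p1 : (N:ℝ) * |Real.log (2*M)| ≤ (a * φ T) * |Real.log (2*M)| :=
          mul_le_mul_of_nonneg_right hNup (abs_nonneg _)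
        have p2 : (a * φ T) * |Real.log (2*M)| ≤ (a * φ T) * |Real.log (2*M)| * L :=
          le_mul_of_one_le_right (by positivity) h4
        have p3 : (N:ℝ) * (-(|Real.log (2*M)|)) ≤ (N:ℝ) * Real.log (2*M) :=
          mul_le_mul_of_nonneg_left habs (Nat.cast_nonneg _)
        linarith [p1, p2, p3]
      have c3 : -(1/c) * (φ T * L) ≤ -T := by
        have hTle : T ≤ c⁻¹ * L := by
          rw [← div_eq_inv_mul, le_div_iff₀ hc]; linarith [hcTL]
        have hL0 : (0:ℝ) ≤ L := by linarith [h4]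
        have hLle : L ≤ φ T * L := le_mul_of_one_le_left hL0 h5
        have h2' := mul_le_mul_of_nonneg_left hLle (inv_pos.mpr hc).le
        rw [one_div]
        linarith [h2', hTle]
      have c4 : (0:ℝ) ≤ ((N + 0 : ℕ) : ℝ) * Real.log T :=
        mul_nonneg (Nat.cast_nonneg _) (Real.log_nonneg hT1.le)
      have c5 : Real.log (Nat.factorial (N + 0) : ℝ) ≤ 2 * a * (φ T * L) := by
        refine hfactle.trans ?_
        have := mul_le_mul hNup hlogN_up hlogN_nonneg (by positivity : (0:ℝ) ≤ a * φ T)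
        linarith [this]
      linarith [c1, c2, c3, c4, c5]
    have hPL : (0:ℝ) < φ T * L := mul_pos hP (lt_of_lt_of_le one_pos h4)
    have hcomb := le_trans hlb hlogt0
    have key : -(2 * a + a * |Real.log (2*M)| + 1 / c) ≤ (φ T * L)⁻¹ * Real.log S := by
      rw [← mul_le_mul_iff_right₀ hPL, mul_inv_cancel_left₀ (ne_of_gt hPL)]
      calc φ T * L * -(2 * a + a * |Real.log (2*M)| + 1 / c)
          = -(2 * a + a * |Real.log (2*M)| + 1 / c) * (φ T * L) := by ring
        _ ≤ Real.log S := hcomb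
    rw [one_div (φ T * L)]
    exact key
  have hcobdd : Filter.IsCoboundedUnder (· ≤ ·) Filter.atTop (fun T : ℝ =>
      (1 / (φ T * Real.log (φ T))) *
        Real.log (∑' j : ℕ,
          Real.exp ((((⌊a * φ T⌋₊ + j : ℕ) : ℝ) / 2) * (1 + l)
                * Real.log ((⌊a * φ T⌋₊ + j : ℕ) : ℝ)
              + ((⌊a * φ T⌋₊ + j : ℕ) : ℝ) * Real.log (2 * M))
            * Real.exp (-T) * T ^ (⌊a * φ T⌋₊ + j) / (Nat.factorial (⌊a * φ T⌋₊ + j)))) :=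
    Filter.IsCoboundedUnder.of_frequently_ge hlow.frequently
  exact Filter.limsup_le_of_le hcobdd hev
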